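/- (Absorption identity) For every f : ℕ → ℕ, all k, n ∈ ℕ, and every integer i with 0 < i ≤ k, one has i · n · binom(k,n)_f = k · ∑_{s=0}^{n} s · binom(i,s)_f · binom(k−i, n−s)_f. -/

import Mathlib

/-- The extended binomial coefficient `binom(k,n)_f`: the sum, over all
`k`-tuples `(π₁,…,π_k)` of nonnegative integers with `π₁ + ⋯ + π_k = n`,
of the products `f(π₁)⋯f(π_k)`. It counts the `f`-weighted integer
compositions of `n` with exactly `k` parts. -/
def extBinom (f : ℕ → ℕ) (k n : ℕ) : ℕ :=
  ∑ π ∈ Finset.Nat.antidiagonalTuple k n, ∏ i, f (π i)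

open Finset

/-- Reindexing the antidiagonal tuple sum by a permutation of coordinates. -/
lemma sum_AT_perm (k n : ℕ) (σ : Equiv.Perm (Fin k)) (g : (Fin k → ℕ) → ℕ) :
    ∑ x ∈ Finset.Nat.antidiagonalTuple k n, g x
      = ∑ x ∈ Finset.Nat.antidiagonalTuple k n, g (x ∘ σ) := by
  refine Finset.sum_nbij' (fun x => x ∘ σ.symm) (fun x => x ∘ σ) ?_ ?_ ?_ ?_ ?_
  · intro x hx
    rw [Finset.Nat.mem_antidiagonalTuple] at hx ⊢
    rw [← hx]
    exact Fintype.sum_equiv σ.symm _ _ (fun _ => rfl)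
  · intro x hx
    rw [Finset.Nat.mem_antidiagonalTuple] at hx ⊢
    rw [← hx]
    exact Fintype.sum_equiv σ _ _ (fun _ => rfl)
  · intro x _; funext j; simp
  · intro x _; funext j; simp
  · intro x _
    congr 1
    funext j; simp

lemma coord_sum_eq (k n : ℕ) (f : ℕ → ℕ) (j j' : Fin k) :
    ∑ x ∈ Finset.Nat.antidiagonalTuple k n, x j * ∏ t, f (x t)
      = ∑ x ∈ Finset.Nat.antidiagonalTuple k n, x j' * ∏ t, f (x t) := by
  rw [sum_AT_perm k n (Equiv.swap j j') (fun x => x j * ∏ t, f (x t))]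
  refine Finset.sum_congr rfl fun x _ => ?_
  show x ((Equiv.swap j j') j) * ∏ t, f (x ((Equiv.swap j j') t)) = _
  rw [Equiv.swap_apply_left]
  congr 1
  exact Fintype.prod_equiv (Equiv.swap j j') _ _ (fun _ => rfl)

/-- Splitting the antidiagonal tuple sum along a decomposition `a + b`. -/
lemma sum_AT_split (a b n : ℕ) (g : (Fin (a + b) → ℕ) → ℕ) :
    ∑ x ∈ Finset.Nat.antidiagonalTuple (a + b) n, g x
      = ∑ p ∈ Finset.HasAntidiagonal.antidiagonal n, ∑ σ ∈ Finset.Nat.antidiagonalTuple a p.1,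
          ∑ τ ∈ Finset.Nat.antidiagonalTuple b p.2, g (Fin.append σ τ) := by
  rw [← Finset.sum_sigma (Finset.HasAntidiagonal.antidiagonal n)
      (fun p => Finset.Nat.antidiagonalTuple a p.1)
      (fun q => ∑ τ ∈ Finset.Nat.antidiagonalTuple b q.1.2, g (Fin.append q.2 τ))]
  rw [← Finset.sum_sigma _
      (fun q : (Σ _p : ℕ × ℕ, Fin a → ℕ) => Finset.Nat.antidiagonalTuple b q.1.2)
      (fun r => g (Fin.append r.1.2 r.2))]
  refine (Finset.sum_nbij' (i := fun x => (⟨⟨(∑ j : Fin a, x (Fin.castAdd b j),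
      ∑ j : Fin b, x (Fin.natAdd a j)), fun j => x (Fin.castAdd b j)⟩,
      fun j => x (Fin.natAdd a j)⟩ : Σ _q : (Σ _p : ℕ × ℕ, Fin a → ℕ), Fin b → ℕ))
      (j := fun r => Fin.append r.1.2 r.2) ?_ ?_ ?_ ?_ ?_)
  · intro x hx
    rw [Finset.Nat.mem_antidiagonalTuple] at hx
    simp only [Finset.mem_sigma, Finset.HasAntidiagonal.mem_antidiagonal,
      Finset.Nat.mem_antidiagonalTuple]
    refine ⟨⟨?_, trivial⟩, trivial⟩
    rw [← hx, Fin.sum_univ_add]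
  · rintro ⟨⟨⟨s, t⟩, σ⟩, τ⟩ hr
    simp only [Finset.mem_sigma, Finset.HasAntidiagonal.mem_antidiagonal,
      Finset.Nat.mem_antidiagonalTuple] at hr
    rw [Finset.Nat.mem_antidiagonalTuple, Fin.sum_univ_add]
    simp only [Fin.append_left, Fin.append_right]
    rw [hr.1.2, hr.2, hr.1.1]
  · intro x _
    funext j
    refine Fin.addCases (fun j => ?_) (fun j => ?_) j
    · simp [Fin.append_left]
    · simp [Fin.append_right]
  · rintro ⟨⟨⟨s, t⟩, σ⟩, τ⟩ hr
    simp only [Finset.mem_sigma, Finset.HasAntidiagonal.mem_antidiagonal,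
      Finset.Nat.mem_antidiagonalTuple] at hr
    simp only [Fin.append_left, Fin.append_right]
    rw [hr.1.2, hr.2]
  · intro x _
    congr 1
    funext j
    refine Fin.addCases (fun j => ?_) (fun j => ?_) j
    · simp [Fin.append_left]
    · simp [Fin.append_right]

theorem extBinom_absorption (f : ℕ → ℕ) (k n i : ℕ) (hi : 0 < i) (hik : i ≤ k) :
    i * n * extBinom f k n =
      k * ∑ s ∈ Finset.range (n + 1),
        s * extBinom f i s * extBinom f (k - i) (n - s) := by
  obtain ⟨b, rfl⟩ : ∃ b, k = i + b := ⟨k - i, (Nat.add_sub_cancel' hik).symm⟩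
  have hb : i + b - i = b := by omega
  rw [hb]
  set j0 : Fin (i + b) := ⟨0, by omega⟩ with hj0
  set C : ℕ := ∑ x ∈ Finset.Nat.antidiagonalTuple (i + b) n, x j0 * ∏ t, f (x t) with hC
  -- total: n * extBinom = (i+b) * C
  have htotal : n * extBinom f (i + b) n = (i + b) * C := by
    rw [extBinom, Finset.mul_sum]
    have : ∀ x ∈ Finset.Nat.antidiagonalTuple (i + b) n,
        n * ∏ t, f (x t) = ∑ j : Fin (i + b), x j * ∏ t, f (x t) := by
      intro x hx
      rw [Finset.Nat.mem_antidiagonalTuple] at hx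
      rw [← Finset.sum_mul, hx]
    rw [Finset.sum_congr rfl this, Finset.sum_comm]
    rw [Finset.sum_congr rfl (fun j _ => coord_sum_eq (i + b) n f j j0)]
    rw [← hC, Finset.sum_const, Finset.card_univ, Fintype.card_fin, smul_eq_mul]
  -- partial: ∑ s = i * C
  have hpartial : (∑ s ∈ Finset.range (n + 1),
      s * extBinom f i s * extBinom f b (n - s)) = i * C := by
    have hr : (∑ s ∈ Finset.range (n + 1), s * extBinom f i s * extBinom f b (n - s))
        = ∑ p ∈ Finset.HasAntidiagonal.antidiagonal n, p.1 * extBinom f i p.1 * extBinom f b p.2 :=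
      (Finset.Nat.sum_antidiagonal_eq_sum_range_succ_mk
        (fun p => p.1 * extBinom f i p.1 * extBinom f b p.2) n).symm
    rw [hr]
    have hsplit := sum_AT_split i b n
      (fun x => (∑ j : Fin i, x (Fin.castAdd b j)) * ∏ t, f (x t))
    have hR : ∀ p : ℕ × ℕ, p ∈ Finset.HasAntidiagonal.antidiagonal n →
        p.1 * extBinom f i p.1 * extBinom f b p.2
        = ∑ σ ∈ Finset.Nat.antidiagonalTuple i p.1,
            ∑ τ ∈ Finset.Nat.antidiagonalTuple b p.2,
              (∑ j : Fin i, (Fin.append σ τ) (Fin.castAdd b j)) *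
                ∏ t, f ((Fin.append σ τ) t) := by
      rintro ⟨s, t⟩ _
      rw [extBinom, extBinom, mul_assoc, Finset.sum_mul_sum, Finset.mul_sum]
      refine Finset.sum_congr rfl fun σ hσ => ?_
      rw [Finset.mul_sum]
      refine Finset.sum_congr rfl fun τ hτ => ?_
      rw [Finset.Nat.mem_antidiagonalTuple] at hσ
      have h1 : (∑ j : Fin i, (Fin.append σ τ) (Fin.castAdd b j)) = s := by
        simp only [Fin.append_left]; exact hσ
      have h2 : (∏ u, f ((Fin.append σ τ) u)) = (∏ u, f (σ u)) * ∏ u, f (τ u) := by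
        rw [Fin.prod_univ_add]
        simp [Fin.append_left, Fin.append_right]
      rw [h1, h2]
    rw [Finset.sum_congr rfl hR, ← hsplit]
    have : ∀ x ∈ Finset.Nat.antidiagonalTuple (i + b) n,
        (∑ j : Fin i, x (Fin.castAdd b j)) * ∏ t, f (x t)
          = ∑ j : Fin i, x (Fin.castAdd b j) * ∏ t, f (x t) := fun x _ =>
      Finset.sum_mul _ _ _
    rw [Finset.sum_congr rfl this, Finset.sum_comm]
    rw [Finset.sum_congr rfl
      (fun j _ => coord_sum_eq (i + b) n f (Fin.castAdd b j) j0)]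
    rw [← hC, Finset.sum_const, Finset.card_univ, Fintype.card_fin, smul_eq_mul]
  calc i * n * extBinom f (i + b) n = i * (n * extBinom f (i + b) n) := by ring
    _ = i * ((i + b) * C) := by rw [htotal]
    _ = (i + b) * (i * C) := by ring
    _ = (i + b) * ∑ s ∈ Finset.range (n + 1),
          s * extBinom f i s * extBinom f b (n - s) := by rw [hpartial]
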